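/- Let Y be a finite connected quandle, and let X = inn(Y) = {R_y : y ∈ Y} be the image of the inner representation, equipped with the quandle operation σ*τ = τ∘σ∘τ⁻¹ (composition in Sym(Y)). Suppose X is connected and |Y| = 2·|X|. Then inn : Y → X is an abelian extension: there exist a quandle 2-cocycle φ : X × X → ℤ/2ℤ and a quandle isomorphism ν : E(X, ℤ/2ℤ, φ) → Y such that inn(ν(x,a)) = x for all x ∈ X and a ∈ ℤ/2ℤ. -/

import Mathlib

/-- A binary operation is a quandle operation: idempotent, right invertible,
and right self-distributive. -/
def IsQuandle {X : Type*} (op : X → X → X) : Prop :=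
  (∀ a, op a a = a) ∧ (∀ b c, ∃! a, op a b = c) ∧
    (∀ a b c, op (op a b) c = op (op a c) (op b c))

/-- A quandle 2-cocycle with values in a (multiplicative) abelian group. -/
def IsCocycle {X A : Type*} [CommGroup A] (op : X → X → X) (φ : X → X → A) : Prop :=
  (∀ x y z, φ x y * (φ x z)⁻¹ * φ (op x y) z * (φ (op x z) (op y z))⁻¹ = 1) ∧
    (∀ x, φ x x = 1)

/-- The operation of the abelian extension `E(X, A, φ)`:
`(x, a) * (y, b) = (x * y, a · φ(x, y))`. -/
def extOp {X A : Type*} [CommGroup A] (op : X → X → X) (φ : X → X → A) :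
    X × A → X × A → X × A :=
  fun p q => (op p.1 q.1, p.2 * φ p.1 q.1)

/-- Let `Y` be a finite connected quandle and `X = inn(Y) = {R_y : y ∈ Y} ⊆ Sym(Y)`,
with the quandle operation `σ * τ = τ ∘ σ ∘ τ⁻¹`.  If `X` is connected and
`|Y| = 2 |X|`, then `inn : Y → X` is an abelian extension: there are a 2-cocycle
`φ : X × X → ℤ/2ℤ` and a quandle isomorphism `ν : E(X, ℤ/2ℤ, φ) → Y` with
`inn(ν(x, a)) = x` for all `x, a`. -/
theorem stmt6 {Y : Type*} [Finite Y] (op : Y → Y → Y) (hq : IsQuandle op)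
    (R : Y → Equiv.Perm Y) (hR : ∀ y a : Y, R y a = op a y)
    (hconnY : ∀ s t : Y, ∃ g ∈ Subgroup.closure (Set.range R), g s = t)
    (opX : Set.range R → Set.range R → Set.range R)
    (hopX : ∀ σ τ : Set.range R,
      (opX σ τ : Equiv.Perm Y) = (τ : Equiv.Perm Y) * (σ : Equiv.Perm Y) * (τ : Equiv.Perm Y)⁻¹)
    (hconnX : ∀ s t : Set.range R, Relation.EqvGen (fun a c => ∃ b, c = opX a b) s t)
    (hcard : Nat.card Y = 2 * Nat.card (Set.range R)) :
    ∃ φ : Set.range R → Set.range R → Multiplicative (ZMod 2),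
      IsCocycle opX φ ∧
      ∃ ν : ↥(Set.range R) × Multiplicative (ZMod 2) ≃ Y,
        (∀ p q : ↥(Set.range R) × Multiplicative (ZMod 2),
          ν (extOp opX φ p q) = op (ν p) (ν q)) ∧
        ∀ (x : Set.range R) (a : Multiplicative (ZMod 2)),
          R (ν (x, a)) = (x : Equiv.Perm Y) := by
  classical
  rcases isEmpty_or_nonempty Y with hY | hY
  · haveI hX : IsEmpty ↥(Set.range R) :=
      ⟨fun x => Exists.elim x.2 fun y _ => hY.elim y⟩
    refine ⟨fun x _ => isEmptyElim x, ⟨fun x => isEmptyElim x, fun x => isEmptyElim x⟩,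
      Equiv.equivOfIsEmpty _ _, fun p => isEmptyElim p, fun x => isEmptyElim x⟩
  -- basic quandle facts
  have hconj : ∀ a b : Y, R (op a b) = R b * R a * (R b)⁻¹ := by
    intro a b
    ext x
    have hu : op ((R b)⁻¹ x) b = x := by rw [← hR]; exact (R b).apply_symm_apply x
    simp only [Equiv.Perm.mul_apply, hR]
    conv_lhs => rw [← hu]
    exact (hq.2.2 _ a b).symm
  have hcong : ∀ a b c : Y, R a = R b → R (op a c) = R (op b c) := by
    intro a b c h; rw [hconj, hconj, h]
  have hRinv : ∀ (c a : Y), R ((R c)⁻¹ a) = (R c)⁻¹ * R a * R c := by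
    intro c a
    have hu : op ((R c)⁻¹ a) c = a := by rw [← hR]; exact (R c).apply_symm_apply a
    have h := hconj ((R c)⁻¹ a) c
    rw [hu] at h
    rw [h]; group
  -- elements of the closure preserve the relation "same R"
  have hcl : ∀ g ∈ Subgroup.closure (Set.range R),
      (∀ a b, R a = R b → R (g a) = R (g b)) ∧
      (∀ a b, R a = R b → R (g⁻¹ a) = R (g⁻¹ b)) := by
    let H : Subgroup (Equiv.Perm Y) :=
      { carrier := {g | (∀ a b, R a = R b → R (g a) = R (g b)) ∧
                        (∀ a b, R a = R b → R (g⁻¹ a) = R (g⁻¹ b))}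
        one_mem' := ⟨fun a b h => by simpa using h, fun a b h => by simpa using h⟩
        mul_mem' := by
          rintro g h ⟨hg1, hg2⟩ ⟨hh1, hh2⟩
          constructor
          · intro a b hab
            simpa [Equiv.Perm.mul_apply] using hg1 _ _ (hh1 a b hab)
          · intro a b hab
            simpa [mul_inv_rev, Equiv.Perm.mul_apply] using hh2 _ _ (hg2 a b hab)
        inv_mem' := by
          rintro g ⟨hg1, hg2⟩
          exact ⟨hg2, by simpa using hg1⟩ }
    have hgen : Set.range R ⊆ ↑H := by
      rintro _ ⟨c, rfl⟩
      constructor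
      · intro a b hab
        rw [hR c a, hR c b]
        exact hcong a b c hab
      · intro a b hab
        rw [hRinv, hRinv, hab]
    intro g hg
    exact (Subgroup.closure_le H).mpr hgen hg
  -- all fibers of `inn` have the same cardinality
  have hfibcard : ∀ a b : Y, {y | R y = R a}.ncard = {y | R y = R b}.ncard := by
    intro a b
    obtain ⟨g, hg, hgab⟩ := hconnY a b
    obtain ⟨hg1, hg2⟩ := hcl g hg
    have himg : {y | R y = R b} = g '' {y | R y = R a} := by
      ext y
      simp only [Set.mem_setOf_eq, Set.mem_image]
      constructor
      · intro hy
        refine ⟨g⁻¹ y, ?_, by simp⟩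
        have h := hg2 y (g a) (by rw [hgab]; exact hy)
        simpa using h
      · rintro ⟨z, hz, rfl⟩
        have h := hg1 z a hz
        rwa [hgab] at h
    rw [himg, Set.ncard_image_of_injective _ g.injective]
  -- counting: each fiber has exactly two elements
  haveI := Fintype.ofFinite Y
  haveI : Fintype ↥(Set.range R) := Fintype.ofFinite _
  have hfib2 : ∀ a : Y, {y | R y = R a}.ncard = 2 := by
    obtain ⟨a₀⟩ := hY
    have hall : ∀ a : Y, {y | R y = R a}.ncard = {y | R y = R a₀}.ncard :=
      fun a => hfibcard a a₀
    set k := {y | R y = R a₀}.ncard with hk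
    let f : Y → ↥(Set.range R) := fun y => ⟨R y, Set.mem_range_self y⟩
    haveI : ∀ x : ↥(Set.range R), Fintype {y // f y = x} := fun x => Fintype.ofFinite _
    have hfx : ∀ x : ↥(Set.range R), Nat.card {y // f y = x} = k := by
      intro x
      obtain ⟨a, ha⟩ := x.2
      have hset : {y | f y = x} = {y | R y = R a} := by
        ext y
        simp only [Set.mem_setOf_eq, f, Subtype.ext_iff, ha]
      calc Nat.card {y // f y = x} = ({y | f y = x}).ncard := Nat.card_coe_set_eq _
        _ = k := by rw [hset, hall a]
    have h1 : Nat.card Y = Nat.card ↥(Set.range R) * k := by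
      calc Nat.card Y = Nat.card (Σ x : ↥(Set.range R), {y // f y = x}) :=
            (Nat.card_congr (Equiv.sigmaFiberEquiv f)).symm
        _ = Fintype.card (Σ x : ↥(Set.range R), {y // f y = x}) := Nat.card_eq_fintype_card
        _ = ∑ x : ↥(Set.range R), Fintype.card {y // f y = x} := Fintype.card_sigma
        _ = ∑ _x : ↥(Set.range R), k := by
            refine Finset.sum_congr rfl fun x _ => ?_
            rw [← Nat.card_eq_fintype_card, hfx x]
        _ = Nat.card ↥(Set.range R) * k := by
            simp [Finset.sum_const, Finset.card_univ, Nat.card_eq_fintype_card, mul_comm]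
    have hpos : 0 < Nat.card ↥(Set.range R) :=
      Nat.card_pos_iff.mpr ⟨⟨⟨R a₀, Set.mem_range_self a₀⟩⟩, inferInstance⟩
    have hk2 : k = 2 := by
      rw [h1] at hcard
      have h2 : Nat.card ↥(Set.range R) * k = Nat.card ↥(Set.range R) * 2 := by
        rw [hcard]; ring
      exact Nat.eq_of_mul_eq_mul_left hpos h2
    intro a
    rw [hall a, hk2]
  -- the fixed-point-free involution swapping each fiber
  have h2 : ∀ a : Y, ∃! b, b ≠ a ∧ R b = R a := by
    intro a
    obtain ⟨p, q, hpq, hset⟩ := Set.ncard_eq_two.mp (hfib2 a)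
    have ha : a ∈ ({p, q} : Set Y) := by rw [← hset]; exact rfl
    rcases ha with rfl | rfl
    · have hqmem : q ∈ {y | R y = R a} := by rw [hset]; exact Set.mem_insert_of_mem _ rfl
      refine ⟨q, ⟨Ne.symm hpq, hqmem⟩, ?_⟩
      rintro y ⟨hy1, hy2⟩
      have : y ∈ ({a, q} : Set Y) := by rw [← hset]; exact hy2
      rcases this with rfl | h
      · exact absurd rfl hy1
      · exact h
    · have hpmem : p ∈ {y | R y = R a} := by rw [hset]; exact Set.mem_insert _ _
      refine ⟨p, ⟨hpq, hpmem⟩, ?_⟩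
      rintro y ⟨hy1, hy2⟩
      have : y ∈ ({p, a} : Set Y) := by rw [← hset]; exact hy2
      rcases this with rfl | h
      · rfl
      · exact absurd h hy1
  choose t ht using h2
  have htne : ∀ a, t a ≠ a := fun a => (ht a).1.1
  have htR : ∀ a, R (t a) = R a := fun a => (ht a).1.2
  have huniq : ∀ a y, y ≠ a → R y = R a → y = t a :=
    fun a y h1' h2' => (ht a).2 y ⟨h1', h2'⟩
  have htt : ∀ a, t (t a) = a :=
    fun a => (huniq (t a) a (Ne.symm (htne a)) (htR a).symm).symm
  -- a section of inn
  choose s hs using fun x : ↥(Set.range R) => x.2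
  -- the deck transformation action
  let T : Multiplicative (ZMod 2) → Y → Y :=
    fun a y => if Multiplicative.toAdd a = 0 then y else t y
  have hTdef : ∀ a z, T a z = if Multiplicative.toAdd a = 0 then z else t z := fun _ _ => rfl
  have hz2 : ∀ v : ZMod 2, v = 0 ∨ v = 1 := by decide
  have h10 : (1 : ZMod 2) ≠ 0 := by decide
  have h11 : (1 + 1 : ZMod 2) = 0 := by decide
  have hRT : ∀ a z, R (T a z) = R z := by
    intro a z
    rw [hTdef]
    by_cases h : Multiplicative.toAdd a = 0
    · rw [if_pos h]
    · rw [if_neg h, htR]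
  have hTT : ∀ a b z, T a (T b z) = T (a * b) z := by
    intro a b z
    rw [hTdef, hTdef, hTdef, toAdd_mul]
    rcases hz2 (Multiplicative.toAdd a) with ha | ha <;>
      rcases hz2 (Multiplicative.toAdd b) with hb | hb <;>
        simp [ha, hb, h10, h11, htt]
  have hTinj : ∀ (a b : Multiplicative (ZMod 2)) (z : Y), T a z = T b z → a = b := by
    intro a b z h
    apply Multiplicative.toAdd.injective
    rw [hTdef, hTdef] at h
    rcases hz2 (Multiplicative.toAdd a) with ha | ha <;>
      rcases hz2 (Multiplicative.toAdd b) with hb | hb <;>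
        rw [ha, hb] <;> rw [ha, hb] at h <;>
          simp [h10] at h <;> first
            | rfl
            | exact absurd h.symm (htne z)
            | exact absurd h (htne z)
  have hopR : ∀ u v w : Y, R v = R w → op u v = op u w := by
    intro u v w h; rw [← hR, ← hR, h]
  have hopT1 : ∀ (a : Multiplicative (ZMod 2)) (z w : Y), op (T a z) w = T a (op z w) := by
    intro a z w
    rw [hTdef, hTdef]
    by_cases h : Multiplicative.toAdd a = 0
    · rw [if_pos h, if_pos h]
    · rw [if_neg h, if_neg h]
      have hne : op (t z) w ≠ op z w := by
        intro hEq
        rw [← hR, ← hR] at hEq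
        exact htne z ((R w).injective hEq)
      exact huniq (op z w) (op (t z) w) hne (hcong (t z) z w (htR z))
  -- the cocycle
  let φ : ↥(Set.range R) → ↥(Set.range R) → Multiplicative (ZMod 2) :=
    fun x y => if op (s x) (s y) = s (opX x y) then 1 else Multiplicative.ofAdd 1
  have hφdef : ∀ x y, φ x y =
      if op (s x) (s y) = s (opX x y) then 1 else Multiplicative.ofAdd 1 := fun _ _ => rfl
  have hfibXY : ∀ x y, R (op (s x) (s y)) = R (s (opX x y)) := by
    intro x y
    rw [hconj, hs, hs, hs, ← hopX]
  have hkey : ∀ x y, op (s x) (s y) = T (φ x y) (s (opX x y)) := by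
    intro x y
    rw [hφdef, hTdef]
    by_cases h : op (s x) (s y) = s (opX x y)
    · rw [if_pos h, toAdd_one, if_pos rfl, h]
    · rw [if_neg h, toAdd_ofAdd, if_neg h10]
      exact huniq (s (opX x y)) _ h (hfibXY x y)
  have hdistX : ∀ x y z, opX (opX x y) z = opX (opX x z) (opX y z) := by
    intro x y z
    apply Subtype.ext
    simp only [hopX]
    group
  -- the equivalence
  let ν₀ : ↥(Set.range R) × Multiplicative (ZMod 2) → Y := fun p => T p.2 (s p.1)
  have hν₀ : ∀ p, ν₀ p = T p.2 (s p.1) := fun _ => rfl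
  have hν₀inj : Function.Injective ν₀ := by
    rintro ⟨x, a⟩ ⟨y, b⟩ h
    rw [hν₀, hν₀] at h
    have hxy : x = y := by
      apply Subtype.ext
      rw [← hs x, ← hs y, ← hRT a (s x), ← hRT b (s y), h]
    subst hxy
    rw [hTinj a b (s x) h]
  haveI : Fintype (↥(Set.range R) × Multiplicative (ZMod 2)) := Fintype.ofFinite _
  have hν₀bij : Function.Bijective ν₀ := by
    rw [Fintype.bijective_iff_injective_and_card]
    refine ⟨hν₀inj, ?_⟩
    rw [← Nat.card_eq_fintype_card, ← Nat.card_eq_fintype_card, Nat.card_prod, hcard]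
    have hM : Nat.card (Multiplicative (ZMod 2)) = 2 := by
      rw [Nat.card_eq_fintype_card]
      rfl
    rw [hM]
    ring
  refine ⟨φ, ⟨?_, ?_⟩, Equiv.ofBijective ν₀ hν₀bij, ?_, ?_⟩
  · -- cocycle identity
    intro x y z
    have hL : op (op (s x) (s y)) (s z)
        = T (φ x y * φ (opX x y) z) (s (opX (opX x y) z)) := by
      rw [hkey x y, hopT1, hkey (opX x y) z, hTT, mul_comm]
    have hR' : op (op (s x) (s z)) (op (s y) (s z))
        = T (φ x z * φ (opX x z) (opX y z)) (s (opX (opX x z) (opX y z))) := by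
      rw [hopR _ _ _ (hfibXY y z), hkey x z, hopT1, hkey (opX x z) (opX y z), hTT, mul_comm]
    have heq : T (φ x y * φ (opX x y) z) (s (opX (opX x y) z))
        = T (φ x z * φ (opX x z) (opX y z)) (s (opX (opX x y) z)) := by
      rw [← hL]
      conv_rhs => rw [hdistX x y z]
      rw [← hR']
      exact hq.2.2 _ _ _
    have hab := hTinj _ _ _ heq
    revert hab
    generalize φ x y = A
    generalize φ x z = B
    generalize φ (opX x y) z = C
    generalize φ (opX x z) (opX y z) = D
    revert A B C D
    decide
  · -- φ x x = 1
    intro x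
    have hxx : opX x x = x := by
      apply Subtype.ext
      rw [hopX]
      group
    rw [hφdef, hxx, hq.1 (s x), if_pos rfl]
  · -- quandle homomorphism
    rintro ⟨x, a⟩ ⟨y, b⟩
    show ν₀ (extOp opX φ (x, a) (y, b)) = op (ν₀ (x, a)) (ν₀ (y, b))
    rw [hν₀, hν₀, hν₀]
    show T (a * φ x y) (s (opX x y)) = op (T a (s x)) (T b (s y))
    rw [hopR _ _ _ (hRT b (s y)), hopT1, hkey x y, hTT]
  · -- compatibility with inn
    intro x a
    show R (ν₀ (x, a)) = (x : Equiv.Perm Y)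
    rw [hν₀, hRT, hs]
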